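/- Let A1 := A^{(1)}[(5,6,7)→(2,3,4)], A2 := A^{(2)}[(1,6,7)→(5,3,4)], A3 := A^{(3)}[(1,2,7)→(5,6,4)]. Set u₁ := d_{415}·d_{715}, u₂ := d_{416}·d_{716}, u₄ := d_{426}·d_{726}, v₁ := d_{412}·d_{712}, v₂ := d_{413}·d_{713}, v₄ := d_{423}·d_{723}, w₁ := d_{425}·d_{725}, w₂ := d_{435}·d_{735}, w₄ := d_{436}·d_{736} (the components of the edge vector e_{47}). Then these nine scalars are not all zero and satisfy the three compatibility relations (u₁, u₂, 0)·A1 = (v₁, v₂, 0), (v₁, u₄, 0)·A2 = (w₁, v₄, 0), and (v₂, v₄, 0)·A3 = (w₂, w₄, 0). -/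

import Mathlib

/-- The determinant `d_{ijk}` built from the columns `(α_i,β_i,γ_i)`, `(α_j,β_j,γ_j)`,
`(α_k,β_k,γ_k)`. -/
noncomputable def dd {F : Type*} [Field F] (al be ga : Fin 7 → F) (i j k : Fin 7) : F :=
  Matrix.det !![al i, al j, al k; be i, be j, be k; ga i, ga j, ga k]

/-- The ansatz matrix `A^{(p)}[(i₁,i₂,i₃)→(o₁,o₂,o₃)]`. -/
noncomputable def ansatz {F : Type*} [Field F] (al be ga : Fin 7 → F) (p : Fin 7)
    (inp out : Fin 3 → Fin 7) : Matrix (Fin 3) (Fin 3) F := fun a b =>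
  dd al be ga (inp (a + 1)) (out b) p * dd al be ga (inp (a + 2)) (out b) p /
    (dd al be ga (inp a) (inp (a + 1)) p * dd al be ga (inp a) (inp (a + 2)) p)

section Helpers
variable {F : Type*} [Field F] (al be ga : Fin 7 → F)

lemma pl (a b c d p : Fin 7) :
    dd al be ga a b p * dd al be ga c d p - dd al be ga a c p * dd al be ga b d p
      + dd al be ga a d p * dd al be ga b c p = 0 := by
  simp only [dd, Matrix.det_fin_three]
  norm_num [Matrix.cons_val_zero, Matrix.cons_val_one, Matrix.head_cons, Matrix.cons_val_two, Matrix.tail_cons]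
  ring

lemma sk (a b p : Fin 7) : dd al be ga a b p = - dd al be ga b a p := by
  simp only [dd, Matrix.det_fin_three]
  norm_num [Matrix.cons_val_zero, Matrix.cons_val_one, Matrix.head_cons, Matrix.cons_val_two, Matrix.tail_cons]
  ring

lemma mid (a p b : Fin 7) : dd al be ga a p b = - dd al be ga a b p := by
  simp only [dd, Matrix.det_fin_three]
  norm_num [Matrix.cons_val_zero, Matrix.cons_val_one, Matrix.head_cons, Matrix.cons_val_two, Matrix.tail_cons]
  ring

lemma ddrep (a b : Fin 7) : dd al be ga a a b = 0 := by
  simp only [dd, Matrix.det_fin_three]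
  norm_num [Matrix.cons_val_zero, Matrix.cons_val_one, Matrix.head_cons, Matrix.cons_val_two, Matrix.tail_cons]

lemma master (t s x y o p : Fin 7) (U1 U2 R : F)
    (hU1 : U1 = dd al be ga t x p * dd al be ga s x p)
    (hU2 : U2 = dd al be ga t y p * dd al be ga s y p)
    (hR : R = dd al be ga t o p * dd al be ga s o p)
    (h1 : dd al be ga x y p ≠ 0) (h2 : dd al be ga x s p ≠ 0)
    (h3 : dd al be ga y s p ≠ 0) :
    U1 * (dd al be ga y o p * dd al be ga s o p / (dd al be ga x y p * dd al be ga x s p)) +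
      U2 * (dd al be ga s o p * dd al be ga x o p / (dd al be ga y s p * dd al be ga y x p)) =
    R := by
  subst hU1 hU2 hR
  rw [sk al be ga y x p]
  field_simp
  linear_combination
    (-(dd al be ga s o p * dd al be ga x s p * dd al be ga y s p)) * pl al be ga t x y o p +
      (dd al be ga s o p * dd al be ga t x p * dd al be ga y o p * dd al be ga y s p) *
        sk al be ga s x p -
      (dd al be ga s o p * dd al be ga x s p * dd al be ga t y p * dd al be ga x o p) *
        sk al be ga s y p

end Helpers

/-- The compatibility relations satisfied by the components of the edge vector `e_{47}`:
with `u₁ = d_{415}d_{715}`, `u₂ = d_{416}d_{716}`, `u₄ = d_{426}d_{726}`,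
`v₁ = d_{412}d_{712}`, `v₂ = d_{413}d_{713}`, `v₄ = d_{423}d_{723}`,
`w₁ = d_{425}d_{725}`, `w₂ = d_{435}d_{735}`, `w₄ = d_{436}d_{736}`
(not all zero), one has `(u₁,u₂,0)·A1 = (v₁,v₂,0)`, `(v₁,u₄,0)·A2 = (w₁,v₄,0)`,
`(v₂,v₄,0)·A3 = (w₂,w₄,0)`. Vertices `1,…,7` are encoded as `0,…,6 : Fin 7`. -/


theorem edgeVector_e47_compatibility {F : Type*} [Field F] (al be ga : Fin 7 → F)
    (hgen : ∀ i j k : Fin 7, i ≠ j → i ≠ k → j ≠ k → dd al be ga i j k ≠ 0) :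
    ¬ (dd al be ga 3 0 4 * dd al be ga 6 0 4 = 0 ∧
       dd al be ga 3 0 5 * dd al be ga 6 0 5 = 0 ∧
       dd al be ga 3 1 5 * dd al be ga 6 1 5 = 0 ∧
       dd al be ga 3 0 1 * dd al be ga 6 0 1 = 0 ∧
       dd al be ga 3 0 2 * dd al be ga 6 0 2 = 0 ∧
       dd al be ga 3 1 2 * dd al be ga 6 1 2 = 0 ∧
       dd al be ga 3 1 4 * dd al be ga 6 1 4 = 0 ∧
       dd al be ga 3 2 4 * dd al be ga 6 2 4 = 0 ∧
       dd al be ga 3 2 5 * dd al be ga 6 2 5 = 0) ∧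
    Matrix.vecMul
        ![dd al be ga 3 0 4 * dd al be ga 6 0 4, dd al be ga 3 0 5 * dd al be ga 6 0 5, 0]
        (ansatz al be ga 0 ![4, 5, 6] ![1, 2, 3]) =
      ![dd al be ga 3 0 1 * dd al be ga 6 0 1, dd al be ga 3 0 2 * dd al be ga 6 0 2, 0] ∧
    Matrix.vecMul
        ![dd al be ga 3 0 1 * dd al be ga 6 0 1, dd al be ga 3 1 5 * dd al be ga 6 1 5, 0]
        (ansatz al be ga 1 ![0, 5, 6] ![4, 2, 3]) =
      ![dd al be ga 3 1 4 * dd al be ga 6 1 4, dd al be ga 3 1 2 * dd al be ga 6 1 2, 0] ∧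
    Matrix.vecMul
        ![dd al be ga 3 0 2 * dd al be ga 6 0 2, dd al be ga 3 1 2 * dd al be ga 6 1 2, 0]
        (ansatz al be ga 2 ![0, 1, 6] ![4, 5, 3]) =
      ![dd al be ga 3 2 4 * dd al be ga 6 2 4, dd al be ga 3 2 5 * dd al be ga 6 2 5, 0] := by
  have hg : ∀ i j k : Fin 7, i ≠ j → i ≠ k → j ≠ k → dd al be ga i j k ≠ 0 := hgen
  refine ⟨fun h => mul_ne_zero (hg 3 0 4 (by decide) (by decide) (by decide))
      (hg 6 0 4 (by decide) (by decide) (by decide)) h.1, ?_, ?_, ?_⟩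
  · funext b
    fin_cases b <;>
      simp [Matrix.vecMul, dotProduct, Fin.sum_univ_three, ansatz]
    · exact master al be ga 3 6 4 5 1 0 _ _ _
        (by rw [mid al be ga 3 0 4, mid al be ga 6 0 4]; ring) (by rw [mid al be ga 3 0 5, mid al be ga 6 0 5]; ring) (by rw [mid al be ga 3 0 1, mid al be ga 6 0 1]; ring)
        (hg 4 5 0 (by decide) (by decide) (by decide)) (hg 4 6 0 (by decide) (by decide) (by decide)) (hg 5 6 0 (by decide) (by decide) (by decide))
    · exact master al be ga 3 6 4 5 2 0 _ _ _
        (by rw [mid al be ga 3 0 4, mid al be ga 6 0 4]; ring) (by rw [mid al be ga 3 0 5, mid al be ga 6 0 5]; ring) (by rw [mid al be ga 3 0 2, mid al be ga 6 0 2]; ring)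
        (hg 4 5 0 (by decide) (by decide) (by decide)) (hg 4 6 0 (by decide) (by decide) (by decide)) (hg 5 6 0 (by decide) (by decide) (by decide))
    · exact master al be ga 3 6 4 5 3 0 _ _ _
        (by rw [mid al be ga 3 0 4, mid al be ga 6 0 4]; ring) (by rw [mid al be ga 3 0 5, mid al be ga 6 0 5]; ring) (by rw [ddrep al be ga 3 0]; ring)
        (hg 4 5 0 (by decide) (by decide) (by decide)) (hg 4 6 0 (by decide) (by decide) (by decide)) (hg 5 6 0 (by decide) (by decide) (by decide))
  · funext b
    fin_cases b <;>
      simp [Matrix.vecMul, dotProduct, Fin.sum_univ_three, ansatz]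
    · exact master al be ga 3 6 0 5 4 1 _ _ _
        (rfl) (by rw [mid al be ga 3 1 5, mid al be ga 6 1 5]; ring) (by rw [mid al be ga 3 1 4, mid al be ga 6 1 4]; ring)
        (hg 0 5 1 (by decide) (by decide) (by decide)) (hg 0 6 1 (by decide) (by decide) (by decide)) (hg 5 6 1 (by decide) (by decide) (by decide))
    · exact master al be ga 3 6 0 5 2 1 _ _ _
        (rfl) (by rw [mid al be ga 3 1 5, mid al be ga 6 1 5]; ring) (by rw [mid al be ga 3 1 2, mid al be ga 6 1 2]; ring)
        (hg 0 5 1 (by decide) (by decide) (by decide)) (hg 0 6 1 (by decide) (by decide) (by decide)) (hg 5 6 1 (by decide) (by decide) (by decide))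
    · exact master al be ga 3 6 0 5 3 1 _ _ _
        (rfl) (by rw [mid al be ga 3 1 5, mid al be ga 6 1 5]; ring) (by rw [ddrep al be ga 3 1]; ring)
        (hg 0 5 1 (by decide) (by decide) (by decide)) (hg 0 6 1 (by decide) (by decide) (by decide)) (hg 5 6 1 (by decide) (by decide) (by decide))
  · funext b
    fin_cases b <;>
      simp [Matrix.vecMul, dotProduct, Fin.sum_univ_three, ansatz]
    · exact master al be ga 3 6 0 1 4 2 _ _ _
        (rfl) (rfl) (by rw [mid al be ga 3 2 4, mid al be ga 6 2 4]; ring)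
        (hg 0 1 2 (by decide) (by decide) (by decide)) (hg 0 6 2 (by decide) (by decide) (by decide)) (hg 1 6 2 (by decide) (by decide) (by decide))
    · exact master al be ga 3 6 0 1 5 2 _ _ _
        (rfl) (rfl) (by rw [mid al be ga 3 2 5, mid al be ga 6 2 5]; ring)
        (hg 0 1 2 (by decide) (by decide) (by decide)) (hg 0 6 2 (by decide) (by decide) (by decide)) (hg 1 6 2 (by decide) (by decide) (by decide))
    · exact master al be ga 3 6 0 1 3 2 _ _ _
        (rfl) (rfl) (by rw [ddrep al be ga 3 2]; ring)
        (hg 0 1 2 (by decide) (by decide) (by decide)) (hg 0 6 2 (by decide) (by decide) (by decide)) (hg 1 6 2 (by decide) (by decide) (by decide))
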